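/- Let f(q) = ∏_{m≥1} (1-q^{3m})^3 (1-q^{9m})^{-1} = ∑_{n≥0} c(n) q^n. Then for every positive integer l with l ≡ 1 (mod 3), c(l) = 0. -/

import Mathlib

open PowerSeries Finset

/-- Coefficient of `q^n` in `∏_{m≥1} (1-q^{3m})^3 (1-q^{9m})^{-1}` (truncation is exact). -/
noncomputable def etaQuotCoeff7 (n : ℕ) : ℚ :=
  PowerSeries.coeff (R := ℚ) n
    (∏ m ∈ Finset.Icc 1 n, ((1 - (X : PowerSeries ℚ) ^ (3 * m)) ^ 3 * (1 - X ^ (9 * m))⁻¹))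

/-- The predicate: coefficients supported on multiples of 3. -/
def Supp3 (f : PowerSeries ℚ) : Prop := ∀ n : ℕ, ¬ (3 ∣ n) → PowerSeries.coeff n f = 0

lemma supp3_one : Supp3 1 := by
  intro n hn
  have hn0 : n ≠ 0 := by rintro rfl; exact hn ⟨0, rfl⟩
  simp [PowerSeries.coeff_one, hn0]

lemma supp3_mul {f g : PowerSeries ℚ} (hf : Supp3 f) (hg : Supp3 g) : Supp3 (f * g) := by
  intro n hn
  rw [PowerSeries.coeff_mul]
  apply Finset.sum_eq_zero
  rintro ⟨i, j⟩ hij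
  rw [Finset.HasAntidiagonal.mem_antidiagonal] at hij
  by_cases hi : 3 ∣ i
  · have hj : ¬ 3 ∣ j := fun hj => hn (hij ▸ Dvd.dvd.add hi hj)
    simp [hg j hj]
  · simp [hf i hi]

lemma supp3_pow {f : PowerSeries ℚ} (hf : Supp3 f) (k : ℕ) : Supp3 (f ^ k) := by
  induction k with
  | zero => simpa using supp3_one
  | succ k ih => rw [pow_succ]; exact supp3_mul ih hf

lemma supp3_one_sub_X_pow (k : ℕ) (hk : 3 ∣ k) : Supp3 (1 - (X : PowerSeries ℚ) ^ k) := by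
  intro n hn
  rw [map_sub]
  have h1 : PowerSeries.coeff n (1 : PowerSeries ℚ) = 0 := supp3_one n hn
  have hnk : n ≠ k := by rintro rfl; exact hn hk
  simp [h1, PowerSeries.coeff_X_pow, hnk]

lemma supp3_inv {f : PowerSeries ℚ} (hf : Supp3 f) : Supp3 f⁻¹ := by
  intro n hn
  induction n using Nat.strong_induction_on with
  | _ n ih =>
    have hn0 : n ≠ 0 := by rintro rfl; exact hn ⟨0, rfl⟩
    rw [PowerSeries.coeff_inv, if_neg hn0]
    have : ∑ x ∈ Finset.HasAntidiagonal.antidiagonal n,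
        (if x.2 < n then PowerSeries.coeff x.1 f * PowerSeries.coeff x.2 f⁻¹ else 0) = 0 := by
      apply Finset.sum_eq_zero
      rintro ⟨i, j⟩ hij
      rw [Finset.HasAntidiagonal.mem_antidiagonal] at hij
      by_cases hjn : j < n
      · rw [if_pos hjn]
        by_cases hi : 3 ∣ i
        · have hj : ¬ 3 ∣ j := fun hj => hn (hij ▸ Dvd.dvd.add hi hj)
          rw [ih j hjn hj, mul_zero]
        · rw [hf i hi, zero_mul]
      · rw [if_neg hjn]
    simp [this]

theorem stmt7 (l : ℕ) (hl : 0 < l) (hmod : l ≡ 1 [MOD 3]) : etaQuotCoeff7 l = 0 := by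
  have hdvd : ¬ (3 ∣ l) := by
    intro h
    have := (Nat.modEq_iff_dvd' (by omega)).mp hmod.symm
    omega
  have hsupp : Supp3 (∏ m ∈ Finset.Icc 1 l,
      ((1 - (X : PowerSeries ℚ) ^ (3 * m)) ^ 3 * (1 - X ^ (9 * m))⁻¹)) := by
    apply Finset.prod_induction _ Supp3 (fun _ _ => supp3_mul) supp3_one
    intro m _
    exact supp3_mul (supp3_pow (supp3_one_sub_X_pow _ ⟨m, rfl⟩) 3)
      (supp3_inv (supp3_one_sub_X_pow _ ⟨3 * m, by ring⟩))
  exact hsupp l hdvd
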